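/- Let u and v = λ(x)u both be quasi-definite moment functionals on Π^d, where λ(x) = a_2·𝕏_2 + a_1·𝕏_1 + a_0 has exact total degree 2, let {ℙ_n} and {ℚ_n} be their monic OPS with three term relation coefficients C_{n,i} (for u) and Ĉ_{n,i} (for v), and let ℙ_n = ℚ_n + M_n ℚ_{n−1} + N_n ℚ_{n−2} be the connection between the two families. Then the compatibility relation C_{n,i} N_{n−1} = N_n Ĉ_{n−2,i} holds automatically for all n ≥ 3 and 1 ≤ i ≤ d; in the proof one uses that L_{n−3,i} A_{n−2,2} − A_{n−3,2} L_{n−1,i} = 0, which follows from the commutation property L_{n,i} L_{n+1,j} = L_{n,j} L_{n+1,i}. -/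

import Mathlib

open MvPolynomial Matrix

/-- The index set for monomials of total degree `n` in `d` variables:
multi-indices (exponent tuples) summing to `n`. Its cardinality is `r_n^d = C(n+d-1,n)`. -/
abbrev Idx (d n : ℕ) : Type := {ν : Fin d → ℕ // ν ∈ Finset.Nat.antidiagonalTuple d n}

/-- The monomial `x^ν` associated with a multi-index `ν` of total degree `n`;
the family `fun α : Idx d n => monIdx α` is the canonical vector `𝕏_n`. -/
noncomputable def monIdx {d n : ℕ} (α : Idx d n) : MvPolynomial (Fin d) ℝ :=
  MvPolynomial.monomial (Finsupp.equivFunOnFinite.symm α.1) 1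

/-- A polynomial system (PS): a sequence of vectors `ℙ_n` of size `r_n^d` whose
entries are polynomials of total degree `n`, the entries of `ℙ_0,…,ℙ_n` forming a
basis of the polynomials of total degree at most `n`. -/
structure PolySystem (d : ℕ) where
  vec : (n : ℕ) → Idx d n → MvPolynomial (Fin d) ℝ
  degree_eq : ∀ n α, (vec n α).totalDegree = n
  indep : LinearIndependent ℝ (fun p : (Σ n : ℕ, Idx d n) => vec p.1 p.2)
  spans : ∀ (n : ℕ) (p : MvPolynomial (Fin d) ℝ), p.totalDegree ≤ n →
    p ∈ Submodule.span ℝ {q | ∃ m ≤ n, ∃ α : Idx d m, q = vec m α}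

/-- `{ℙ_n}` is an orthogonal polynomial system (OPS) with respect to the moment
functional `u` : `⟨u, 𝕏_m ℙ_n^t⟩ = 0` for `m < n` and `⟨u, 𝕏_n ℙ_n^t⟩` nonsingular. -/
def IsOPS {d : ℕ} (u : MvPolynomial (Fin d) ℝ →ₗ[ℝ] ℝ) (P : PolySystem d) : Prop :=
  (∀ m n : ℕ, m < n → ∀ (α : Idx d m) (β : Idx d n), u (monIdx α * P.vec n β) = 0) ∧
  (∀ n : ℕ, IsUnit (Matrix.of fun α β : Idx d n => u (monIdx α * P.vec n β)).det)

/-- `u` is quasi-definite iff it admits an OPS. -/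
def QuasiDefinite {d : ℕ} (u : MvPolynomial (Fin d) ℝ →ₗ[ℝ] ℝ) : Prop :=
  ∃ P : PolySystem d, IsOPS u P

/-- `H_n = ⟨u, ℙ_n ℙ_n^t⟩`. -/
noncomputable def Hmat {d : ℕ} (u : MvPolynomial (Fin d) ℝ →ₗ[ℝ] ℝ) (P : PolySystem d)
    (n : ℕ) : Matrix (Idx d n) (Idx d n) ℝ :=
  Matrix.of fun α β => u (P.vec n α * P.vec n β)

/-- `P_m(u;x,y) = ℙ_m(x)^t H_m⁻¹ ℙ_m(y)`. -/
noncomputable def kerP {d : ℕ} (u : MvPolynomial (Fin d) ℝ →ₗ[ℝ] ℝ) (P : PolySystem d)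
    (m : ℕ) (x y : Fin d → ℝ) : ℝ :=
  ∑ α, ∑ β, eval x (P.vec m α) * (Hmat u P m)⁻¹ α β * eval y (P.vec m β)

/-- `kerLT u P n = K_{n-1}(u;·,·) = Σ_{m<n} P_m(u;·,·)`, so that `kerLT u P 0 = K_{-1} = 0`. -/
noncomputable def kerLT {d : ℕ} (u : MvPolynomial (Fin d) ℝ →ₗ[ℝ] ℝ) (P : PolySystem d)
    (n : ℕ) (x y : Fin d → ℝ) : ℝ :=
  ∑ m ∈ Finset.range n, kerP u P m x y

/-- `𝖯_n(ξ) = (ℙ_n(ξ_1)|⋯|ℙ_n(ξ_N))`. -/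
noncomputable def Pmat {d N : ℕ} (P : PolySystem d) (ξ : Fin N → (Fin d → ℝ)) (n : ℕ) :
    Matrix (Idx d n) (Fin N) ℝ :=
  Matrix.of fun α i => eval (ξ i) (P.vec n α)

/-- `Kmat u P ξ n = 𝒦_{n-1} = (K_{n-1}(u;ξ_i,ξ_j))_{i,j}`, with `𝒦_{-1} = 0`. -/
noncomputable def Kmat {d N : ℕ} (u : MvPolynomial (Fin d) ℝ →ₗ[ℝ] ℝ) (P : PolySystem d)
    (ξ : Fin N → (Fin d → ℝ)) (n : ℕ) : Matrix (Fin N) (Fin N) ℝ :=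
  Matrix.of fun i j => kerLT u P n (ξ i) (ξ j)

/-- `Kvec u P ξ n x = 𝖪_{n-1}(ξ,x) = (K_{n-1}(u;ξ_1,x),…,K_{n-1}(u;ξ_N,x))^t`, with `𝖪_{-1}=0`. -/
noncomputable def Kvec {d N : ℕ} (u : MvPolynomial (Fin d) ℝ →ₗ[ℝ] ℝ) (P : PolySystem d)
    (ξ : Fin N → (Fin d → ℝ)) (n : ℕ) (x : Fin d → ℝ) : Fin N → ℝ :=
  fun i => kerLT u P n (ξ i) x

/-- A PS is monic if the degree-`n` homogeneous part of the entry of `ℙ_n` indexed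
by `α` is exactly the monomial `x^α`. -/
def PolySystem.IsMonic {d : ℕ} (P : PolySystem d) : Prop :=
  ∀ (n : ℕ) (α : Idx d n) (ν : Fin d →₀ ℕ), (ν.sum fun _ e => e) = n →
    MvPolynomial.coeff ν (P.vec n α) = if ν = Finsupp.equivFunOnFinite.symm α.1 then 1 else 0

/-- Multiplication of a real matrix times a vector of polynomials. -/
noncomputable def matVec {d : ℕ} {a b : Type} [Fintype b] (M : Matrix a b ℝ)
    (w : b → MvPolynomial (Fin d) ℝ) (i : a) : MvPolynomial (Fin d) ℝ :=
  ∑ j, M i j • w j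

/-- The matrix `L_{n,i}` determined by `x_i 𝕏_n = L_{n,i} 𝕏_{n+1}`. -/
noncomputable def Lmat (d n : ℕ) (i : Fin d) : Matrix (Idx d n) (Idx d (n + 1)) ℝ :=
  Matrix.of fun α β => if β.1 = (fun j => α.1 j + if j = i then 1 else 0) then 1 else 0

/-- The unique multi-index of degree 0. -/
def zeroIdx {d : ℕ} : Idx d 0 :=
  ⟨fun _ => 0, by simp [Finset.Nat.mem_antidiagonalTuple]⟩

/-- The degree-2 multi-index `e_i + e_j`. -/
def e2 {d : ℕ} (i j : Fin d) : Idx d 2 :=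
  ⟨fun k => (if k = i then 1 else 0) + (if k = j then 1 else 0), by
    simp [Finset.Nat.mem_antidiagonalTuple, Finset.sum_add_distrib]⟩

/-- `A_{h,2} = Σ_{1≤i≤j≤d} a^{(2)}_{ij} L_{h,j} L_{h+1,i}`. -/
noncomputable def Amat2 {d : ℕ} (a2 : Idx d 2 → ℝ) (h : ℕ) :
    Matrix (Idx d h) (Idx d (h + 2)) ℝ :=
  ∑ i : Fin d, ∑ j : Fin d,
    if i ≤ j then a2 (e2 i j) • (Lmat d h j * Lmat d (h + 1) i) else 0

/-- The polynomial `λ(x) = a_2·𝕏_2 + a_1·𝕏_1 + a_0`. -/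
noncomputable def lamPoly {d : ℕ} (a2 : Idx d 2 → ℝ) (a1 : Idx d 1 → ℝ) (a0 : ℝ) :
    MvPolynomial (Fin d) ℝ :=
  (∑ α : Idx d 2, a2 α • monIdx α) + (∑ α : Idx d 1, a1 α • monIdx α) + MvPolynomial.C a0

section Helpers

variable {d : ℕ}

lemma map_mul_matVec (v : MvPolynomial (Fin d) ℝ →ₗ[ℝ] ℝ) (q : MvPolynomial (Fin d) ℝ)
    {a b : Type} [Fintype b] (A : Matrix a b ℝ) (w : b → MvPolynomial (Fin d) ℝ) (α : a) :
    v (q * matVec A w α) = ∑ j, A α j * v (q * w j) := by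
  simp [matVec, Finset.mul_sum, mul_smul_comm, map_sum]

lemma X_mul_matVec (i : Fin d) {a b : Type} [Fintype b] (A : Matrix a b ℝ)
    (w : b → MvPolynomial (Fin d) ℝ) (α : a) :
    X i * matVec A w α = matVec A (fun j => X i * w j) α := by
  simp [matVec, Finset.mul_sum, mul_smul_comm]

lemma Lmat_mul_apply (m : ℕ) (i j : Fin d) (α : Idx d m) (γ : Idx d (m + 2)) :
    (Lmat d m i * Lmat d (m + 1) j) α γ =
      if γ.1 = (fun k => α.1 k + ((if k = i then 1 else 0) + (if k = j then 1 else 0)))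
        then 1 else 0 := by
  classical
  have hα : ∑ k, α.1 k = m := Finset.Nat.mem_antidiagonalTuple.mp α.2
  set f : Fin d → ℕ := fun k => α.1 k + if k = i then 1 else 0 with hf
  have hfmem : f ∈ Finset.Nat.antidiagonalTuple d (m + 1) := by
    rw [Finset.Nat.mem_antidiagonalTuple]
    simp [f, Finset.sum_add_distrib, hα]
  set β₀ : Idx d (m + 1) := ⟨f, hfmem⟩ with hβ₀
  have hcond : ∀ β : Idx d (m + 1), (β.1 = f) = (β = β₀) := by
    intro β; simp [hβ₀, Subtype.ext_iff]
  rw [Matrix.mul_apply]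
  simp only [Lmat, Matrix.of_apply, ← hf, hcond, ite_mul, one_mul, zero_mul]
  rw [Finset.sum_ite_eq' Finset.univ β₀]
  simp only [Finset.mem_univ, if_true]
  congr 1
  · show (γ.1 = fun k => f k + if k = j then 1 else 0) = _
    congr 1
    funext k
    simp [f, add_assoc]

lemma Lmat_comm (m : ℕ) (i j : Fin d) :
    Lmat d m i * Lmat d (m + 1) j = Lmat d m j * Lmat d (m + 1) i := by
  ext α γ
  rw [Lmat_mul_apply, Lmat_mul_apply]
  congr 1
  rw [eq_iff_iff]
  constructor <;> intro h <;> (rw [h]; funext k; ring)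

lemma L_Amat2 (a2 : Idx d 2 → ℝ) (m : ℕ) (i : Fin d) :
    Lmat d m i * Amat2 a2 (m + 1) = Amat2 a2 m * Lmat d (m + 2) i := by
  unfold Amat2
  rw [Matrix.mul_sum, Matrix.sum_mul]
  refine Finset.sum_congr rfl fun p _ => ?_
  rw [Matrix.mul_sum, Matrix.sum_mul]
  refine Finset.sum_congr rfl fun q _ => ?_
  split_ifs with h
  · rw [Matrix.mul_smul, Matrix.smul_mul]
    congr 1
    calc Lmat d m i * (Lmat d (m + 1) q * Lmat d (m + 2) p)
        = (Lmat d m i * Lmat d (m + 1) q) * Lmat d (m + 2) p := by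
          rw [Matrix.mul_assoc]
      _ = (Lmat d m q * Lmat d (m + 1) i) * Lmat d (m + 2) p := by rw [Lmat_comm]
      _ = Lmat d m q * (Lmat d (m + 1) i * Lmat d (m + 2) p) := by rw [Matrix.mul_assoc]
      _ = Lmat d m q * (Lmat d (m + 1) p * Lmat d (m + 2) i) := by rw [Lmat_comm]
      _ = (Lmat d m q * Lmat d (m + 1) p) * Lmat d (m + 2) i := by rw [Matrix.mul_assoc]
  · simp

end Helpers

/-- Remark after Theorem 4.2.  If `u` and `v = λ(x)u` are both
quasi-definite, with monic OPS `{ℙ_n}`, `{ℚ_n}`, three term coefficients `C_{n,i}` and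
`Ĉ_{n,i}`, and connection `ℙ_n = ℚ_n + M_nℚ_{n-1} + N_nℚ_{n-2}`, then the compatibility
relation `C_{n,i}N_{n-1} = N_nĈ_{n-2,i}` holds automatically for all `n ≥ 3`; moreover
`L_{n-3,i}A_{n-2,2} - A_{n-3,2}L_{n-1,i} = 0`, a consequence of
`L_{n,i}L_{n+1,j} = L_{n,j}L_{n+1,i}`.
(Indexing: `B n i = B_{n,i}`, `C n i = C_{n+1,i}`, `M n = M_{n+1}`, `Nm n = N_{n+2}`,
likewise for the hatted matrices.) -/
theorem christoffel_compatibility_automatic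
    {d : ℕ} (hd : 1 ≤ d)
    (u v : MvPolynomial (Fin d) ℝ →ₗ[ℝ] ℝ)
    (a2 : Idx d 2 → ℝ) (a1 : Idx d 1 → ℝ) (a0 : ℝ) (ha2 : a2 ≠ 0)
    (hv : ∀ p : MvPolynomial (Fin d) ℝ, v p = u (lamPoly a2 a1 a0 * p))
    (P : PolySystem d) (hP : IsOPS u P) (hPmonic : P.IsMonic)
    (Q : PolySystem d) (hQ : IsOPS v Q) (hQmonic : Q.IsMonic)
    (B : (n : ℕ) → Fin d → Matrix (Idx d n) (Idx d n) ℝ)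
    (C : (n : ℕ) → Fin d → Matrix (Idx d (n + 1)) (Idx d n) ℝ)
    (h3term0 : ∀ (i : Fin d) (α : Idx d 0),
      X i * P.vec 0 α = matVec (Lmat d 0 i) (P.vec 1) α + matVec (B 0 i) (P.vec 0) α)
    (h3term : ∀ (n : ℕ) (i : Fin d) (α : Idx d (n + 1)),
      X i * P.vec (n + 1) α = matVec (Lmat d (n + 1) i) (P.vec (n + 2)) α +
        matVec (B (n + 1) i) (P.vec (n + 1)) α + matVec (C n i) (P.vec n) α)
    (Bh : (n : ℕ) → Fin d → Matrix (Idx d n) (Idx d n) ℝ)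
    (Ch : (n : ℕ) → Fin d → Matrix (Idx d (n + 1)) (Idx d n) ℝ)
    (h3termQ0 : ∀ (i : Fin d) (α : Idx d 0),
      X i * Q.vec 0 α = matVec (Lmat d 0 i) (Q.vec 1) α + matVec (Bh 0 i) (Q.vec 0) α)
    (h3termQ : ∀ (n : ℕ) (i : Fin d) (α : Idx d (n + 1)),
      X i * Q.vec (n + 1) α = matVec (Lmat d (n + 1) i) (Q.vec (n + 2)) α +
        matVec (Bh (n + 1) i) (Q.vec (n + 1)) α + matVec (Ch n i) (Q.vec n) α)
    (M : (n : ℕ) → Matrix (Idx d (n + 1)) (Idx d n) ℝ)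
    (Nm : (n : ℕ) → Matrix (Idx d (n + 2)) (Idx d n) ℝ)
    (hconn1 : ∀ α : Idx d 1, P.vec 1 α = Q.vec 1 α + matVec (M 0) (Q.vec 0) α)
    (hconn : ∀ (n : ℕ) (α : Idx d (n + 2)),
      P.vec (n + 2) α = Q.vec (n + 2) α + matVec (M (n + 1)) (Q.vec (n + 1)) α +
        matVec (Nm n) (Q.vec n) α) :
    (∀ (n : ℕ) (i : Fin d), C (n + 2) i * Nm n = Nm (n + 1) * Ch n i) ∧
    (∀ (m : ℕ) (i : Fin d),
      Lmat d m i * Amat2 a2 (m + 1) - Amat2 a2 m * Lmat d (m + 2) i = 0) := by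
  classical
  constructor
  · intro n i
    -- key identity via orthogonality of Q w.r.t. v
    have key : ∀ (α : Idx d (n + 3)) (γ : Idx d n),
        ∑ δ, (C (n + 2) i * Nm n) α δ * v (monIdx γ * Q.vec n δ)
          = ∑ δ, (Nm (n + 1) * Ch n i) α δ * v (monIdx γ * Q.vec n δ) := by
      intro α γ
      have hz : ∀ (m : ℕ), n < m → ∀ β : Idx d m, v (monIdx γ * Q.vec m β) = 0 :=
        fun m hm β => hQ.1 n m hm γ β
      have hz1 := hz (n + 1) (by omega)
      have hz2 := hz (n + 2) (by omega)
      have hz3 := hz (n + 3) (by omega)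
      have hz4 := hz (n + 4) (by omega)
      have hvP2 : ∀ β : Idx d (n + 2), v (monIdx γ * P.vec (n + 2) β)
          = ∑ δ, Nm n β δ * v (monIdx γ * Q.vec n δ) := by
        intro β
        rw [hconn n β]
        simp [mul_add, map_mul_matVec, hz1, hz2]
      have hvP3 : ∀ β : Idx d (n + 3), v (monIdx γ * P.vec (n + 3) β) = 0 := by
        intro β
        rw [hconn (n + 1) β]
        simp [mul_add, map_mul_matVec, hz1, hz2, hz3]
      have hvP4 : ∀ β : Idx d (n + 4), v (monIdx γ * P.vec (n + 4) β) = 0 := by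
        intro β
        rw [hconn (n + 2) β]
        simp [mul_add, map_mul_matVec, hz2, hz3, hz4]
      have hx3 : v (monIdx γ * (X i * Q.vec (n + 3) α)) = 0 := by
        rw [h3termQ (n + 2) i α]
        simp [mul_add, map_mul_matVec, hz2, hz3, hz4]
      have hx2 : ∀ β : Idx d (n + 2), v (monIdx γ * (X i * Q.vec (n + 2) β)) = 0 := by
        intro β
        rw [h3termQ (n + 1) i β]
        simp [mul_add, map_mul_matVec, hz1, hz2, hz3]
      have hx1 : ∀ β : Idx d (n + 1), v (monIdx γ * (X i * Q.vec (n + 1) β))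
          = ∑ δ, Ch n i β δ * v (monIdx γ * Q.vec n δ) := by
        intro β
        rw [h3termQ n i β]
        simp [mul_add, map_mul_matVec, hz1, hz2]
      have e1 : v (monIdx γ * (X i * P.vec (n + 3) α))
          = ∑ δ, (C (n + 2) i * Nm n) α δ * v (monIdx γ * Q.vec n δ) := by
        rw [h3term (n + 2) i α]
        simp only [mul_add, map_add, map_mul_matVec, hvP4, hvP3, hvP2, mul_zero,
          Finset.sum_const_zero, zero_add, add_zero]
        simp only [Finset.mul_sum]
        rw [Finset.sum_comm]
        simp only [Matrix.mul_apply, Finset.sum_mul]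
        exact Finset.sum_congr rfl fun δ _ => Finset.sum_congr rfl fun β _ => by ring
      have e2 : v (monIdx γ * (X i * P.vec (n + 3) α))
          = ∑ δ, (Nm (n + 1) * Ch n i) α δ * v (monIdx γ * Q.vec n δ) := by
        rw [show P.vec (n + 3) α = Q.vec (n + 3) α + matVec (M (n + 2)) (Q.vec (n + 2)) α
            + matVec (Nm (n + 1)) (Q.vec (n + 1)) α from hconn (n + 1) α]
        simp only [mul_add, map_add, X_mul_matVec, map_mul_matVec, hx3, hx2, hx1,
          mul_zero, Finset.sum_const_zero, zero_add, add_zero]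
        simp only [Finset.mul_sum]
        rw [Finset.sum_comm]
        simp only [Matrix.mul_apply, Finset.sum_mul]
        exact Finset.sum_congr rfl fun δ _ => Finset.sum_congr rfl fun β _ => by ring
      exact e1.symm.trans e2
    set G : Matrix (Idx d n) (Idx d n) ℝ :=
      Matrix.of fun a b : Idx d n => v (monIdx a * Q.vec n b) with hG
    have hGdet : IsUnit Gᵀ.det := by
      rw [Matrix.det_transpose]; exact hQ.2 n
    have hmat : (C (n + 2) i * Nm n - Nm (n + 1) * Ch n i) * Gᵀ = 0 := by
      ext α γ
      simp only [Matrix.mul_apply, Matrix.sub_apply, Matrix.transpose_apply,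
        Matrix.zero_apply, sub_mul, Finset.sum_sub_distrib, hG, Matrix.of_apply]
      rw [sub_eq_zero]
      exact key α γ
    have hD : C (n + 2) i * Nm n - Nm (n + 1) * Ch n i = 0 := by
      calc C (n + 2) i * Nm n - Nm (n + 1) * Ch n i
          = (C (n + 2) i * Nm n - Nm (n + 1) * Ch n i) * (Gᵀ * Gᵀ⁻¹) := by
            rw [Matrix.mul_nonsing_inv _ hGdet, Matrix.mul_one]
        _ = ((C (n + 2) i * Nm n - Nm (n + 1) * Ch n i) * Gᵀ) * Gᵀ⁻¹ := by
            rw [Matrix.mul_assoc]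
        _ = 0 := by rw [hmat, Matrix.zero_mul]
    exact sub_eq_zero.mp hD
  · intro m i
    rw [L_Amat2]
    exact sub_self _
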